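/- Let V be a real inner product space, L : V → V a bounded linear operator with ⟨Lv, v⟩ ≤ 0 for all v ∈ V, and define the semi-inner-product [w,v] := -⟨Lw,v⟩ - ⟨w,Lv⟩ with semi-norm |v| := √[v,v]. Let N ∈ ℕ, τ > 0, and suppose the real symmetric matrix Υ = (γ_{ij})_{i,j=0}^N admits a decomposition Υ = -U^T D U where U = (μ_{kj}) is upper triangular and D = diag(d_0,...,d_N) with d_k ≥ 0. Then for any v ∈ V: ∑_{i=0}^N ∑_{j=0}^N γ_{ij} τ^{i+j+1} [L^i v, L^j v] = -∑_{k=0}^N d_k τ^{2k+1} |L^k v^{(k)}|^2 ≤ 0, where v^{(k)} = ∑_{j=k}^N μ_{kj} (τL)^{j-k} v. -/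
import Mathlib


open scoped RealInnerProductSpace

theorem aux_expand {V : Type*} [NormedAddCommGroup V] [InnerProductSpace ℝ V]
    (L : V →L[ℝ] V) {ι : Type*} [Fintype ι] (a : ι → ℝ) (u : ι → V) :
    (-⟪(∑ i, a i • u i), L (∑ j, a j • u j)⟫ - ⟪L (∑ i, a i • u i), (∑ j, a j • u j)⟫ : ℝ)
    = ∑ i, ∑ j, a i * a j * (-⟪u i, L (u j)⟫ - ⟪L (u i), u j⟫) := by
  have h1 : ∀ (f : ι → ι → ℝ), ∑ x, ∑ y, a x * a y * f y x = ∑ x, ∑ y, a x * a y * f x y := by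
    intro f
    rw [Finset.sum_comm]
    exact Finset.sum_congr rfl fun x _ => Finset.sum_congr rfl fun y _ => by ring
  simp only [map_sum, map_smul, inner_sum, sum_inner, real_inner_smul_left, real_inner_smul_right,
    mul_sub, mul_neg, Finset.sum_sub_distrib, Finset.sum_neg_distrib, Finset.mul_sum]
  ring_nf
  rw [h1 (fun i j => ⟪u i, L (u j)⟫), h1 (fun i j => ⟪L (u i), u j⟫)]

/-- Lemma 2.2: if `Υ = -U^T D U` with `U` upper triangular and `D` diagonal nonnegative, then
`∑_{i,j} γ_{ij} τ^{i+j+1} [L^i v, L^j v] = -∑_k d_k τ^{2k+1} |L^k v^{(k)}|² ≤ 0`,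
where `[w,u] = -⟪Lw,u⟫ - ⟪w,Lu⟫` and `v^{(k)} = ∑_{j≥k} μ_{kj} (τL)^{j-k} v`. -/
theorem quadratic_form_cholesky
    {V : Type*} [NormedAddCommGroup V] [InnerProductSpace ℝ V] [CompleteSpace V]
    (L : V →L[ℝ] V) (hL : ∀ v : V, ⟪L v, v⟫ ≤ 0)
    (N : ℕ) (τ : ℝ) (hτ : 0 < τ)
    (γ : Fin (N + 1) → Fin (N + 1) → ℝ) (μ : Fin (N + 1) → Fin (N + 1) → ℝ)
    (d : Fin (N + 1) → ℝ)
    (hdecomp : ∀ i j, γ i j = -(∑ k, μ k i * d k * μ k j))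
    (htri : ∀ k j : Fin (N + 1), j.val < k.val → μ k j = 0)
    (hd : ∀ k, 0 ≤ d k)
    (v : V) :
    (∑ i : Fin (N + 1), ∑ j : Fin (N + 1),
        γ i j * τ ^ (i.val + j.val + 1) *
          (-⟪(L ^ i.val) v, L ((L ^ j.val) v)⟫ - ⟪L ((L ^ i.val) v), (L ^ j.val) v⟫)) =
      -(∑ k : Fin (N + 1), d k * τ ^ (2 * k.val + 1) *
          (-⟪(L ^ k.val) (∑ j : Fin (N + 1), μ k j • ((τ • L) ^ (j.val - k.val)) v),
              L ((L ^ k.val) (∑ j : Fin (N + 1), μ k j • ((τ • L) ^ (j.val - k.val)) v))⟫ -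
            ⟪L ((L ^ k.val) (∑ j : Fin (N + 1), μ k j • ((τ • L) ^ (j.val - k.val)) v)),
              (L ^ k.val) (∑ j : Fin (N + 1), μ k j • ((τ • L) ^ (j.val - k.val)) v)⟫)) ∧
    (∑ i : Fin (N + 1), ∑ j : Fin (N + 1),
        γ i j * τ ^ (i.val + j.val + 1) *
          (-⟪(L ^ i.val) v, L ((L ^ j.val) v)⟫ - ⟪L ((L ^ i.val) v), (L ^ j.val) v⟫)) ≤ 0 := by
  set b : Fin (N + 1) → Fin (N + 1) → ℝ := fun i j =>
    -⟪(L ^ i.val) v, L ((L ^ j.val) v)⟫ - ⟪L ((L ^ i.val) v), (L ^ j.val) v⟫ with hb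
  -- Step 1: identify L^k applied to v^{(k)}
  have hw : ∀ k : Fin (N + 1),
      (L ^ k.val) (∑ j : Fin (N + 1), μ k j • ((τ • L) ^ (j.val - k.val)) v)
        = ∑ j : Fin (N + 1), (μ k j * τ ^ (j.val - k.val)) • (L ^ j.val) v := by
    have hsp : ∀ (m : ℕ) (w : V), ((τ • L) ^ m) w = τ ^ m • (L ^ m) w := by
      intro m
      induction m with
      | zero => intro w; simp
      | succ n ih =>
        intro w
        have h1 : ((τ • L) ^ (n + 1)) w = ((τ • L) ^ n) ((τ • L) w) := by
          rw [pow_succ]; rfl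
        have h2 : (L ^ (n + 1)) w = (L ^ n) (L w) := by rw [pow_succ]; rfl
        rw [h1, ih, h2, ContinuousLinearMap.smul_apply, map_smul, pow_succ]
        rw [smul_smul]
    intro k
    rw [map_sum]
    refine Finset.sum_congr rfl fun j _ => ?_
    rcases lt_or_ge j.val k.val with h | h
    · simp [htri k j h]
    · rw [map_smul, hsp, map_smul, smul_smul]
      congr 1
      have : (L ^ (k.val + (j.val - k.val))) v = (L ^ k.val) ((L ^ (j.val - k.val)) v) := by
        rw [pow_add]; rfl
      rw [← this]
      congr 2
      omega
  -- Step 2: each k-summand of the RHS equals the corresponding double sum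
  have key : ∀ k : Fin (N + 1),
      d k * τ ^ (2 * k.val + 1) *
          (-⟪(L ^ k.val) (∑ j : Fin (N + 1), μ k j • ((τ • L) ^ (j.val - k.val)) v),
              L ((L ^ k.val) (∑ j : Fin (N + 1), μ k j • ((τ • L) ^ (j.val - k.val)) v))⟫ -
            ⟪L ((L ^ k.val) (∑ j : Fin (N + 1), μ k j • ((τ • L) ^ (j.val - k.val)) v)),
              (L ^ k.val) (∑ j : Fin (N + 1), μ k j • ((τ • L) ^ (j.val - k.val)) v)⟫)
        = ∑ i : Fin (N + 1), ∑ j : Fin (N + 1),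
            μ k i * d k * μ k j * τ ^ (i.val + j.val + 1) * b i j := by
    intro k
    rw [hw k, aux_expand L (fun j : Fin (N + 1) => μ k j * τ ^ (j.val - k.val))
      (fun j : Fin (N + 1) => (L ^ j.val) v), Finset.mul_sum]
    refine Finset.sum_congr rfl fun i _ => ?_
    rw [Finset.mul_sum]
    refine Finset.sum_congr rfl fun j _ => ?_
    rcases lt_or_ge i.val k.val with h | h
    · simp [htri k i h]
    rcases lt_or_ge j.val k.val with h' | h'
    · simp [htri k j h']
    have hpow : τ ^ (i.val - k.val) * τ ^ (j.val - k.val) * τ ^ (2 * k.val + 1)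
        = τ ^ (i.val + j.val + 1) := by
      rw [← pow_add, ← pow_add]
      congr 1
      omega
    calc d k * τ ^ (2 * k.val + 1) *
          (μ k i * τ ^ (i.val - k.val) * (μ k j * τ ^ (j.val - k.val)) * b i j)
        = μ k i * d k * μ k j *
            (τ ^ (i.val - k.val) * τ ^ (j.val - k.val) * τ ^ (2 * k.val + 1)) * b i j := by
          ring
      _ = μ k i * d k * μ k j * τ ^ (i.val + j.val + 1) * b i j := by rw [hpow]
  -- Step 3: the main equality
  have main : (∑ i : Fin (N + 1), ∑ j : Fin (N + 1),
        γ i j * τ ^ (i.val + j.val + 1) * b i j) =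
      -(∑ k : Fin (N + 1), d k * τ ^ (2 * k.val + 1) *
          (-⟪(L ^ k.val) (∑ j : Fin (N + 1), μ k j • ((τ • L) ^ (j.val - k.val)) v),
              L ((L ^ k.val) (∑ j : Fin (N + 1), μ k j • ((τ • L) ^ (j.val - k.val)) v))⟫ -
            ⟪L ((L ^ k.val) (∑ j : Fin (N + 1), μ k j • ((τ • L) ^ (j.val - k.val)) v)),
              (L ^ k.val) (∑ j : Fin (N + 1), μ k j • ((τ • L) ^ (j.val - k.val)) v)⟫)) := by
    simp only [key, hdecomp, neg_mul, Finset.sum_neg_distrib, Finset.sum_mul, neg_inj]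
    calc (∑ i : Fin (N+1), ∑ j : Fin (N+1), ∑ k : Fin (N+1),
            μ k i * d k * μ k j * τ ^ (i.val + j.val + 1) * b i j)
        = ∑ i : Fin (N+1), ∑ k : Fin (N+1), ∑ j : Fin (N+1),
            μ k i * d k * μ k j * τ ^ (i.val + j.val + 1) * b i j :=
          Finset.sum_congr rfl fun i _ => Finset.sum_comm
      _ = ∑ k : Fin (N+1), ∑ i : Fin (N+1), ∑ j : Fin (N+1),
            μ k i * d k * μ k j * τ ^ (i.val + j.val + 1) * b i j := Finset.sum_comm
  refine ⟨main, ?_⟩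
  rw [main, neg_nonpos]
  refine Finset.sum_nonneg fun k _ => ?_
  set u := (L ^ k.val) (∑ j : Fin (N + 1), μ k j • ((τ • L) ^ (j.val - k.val)) v)
  have h1 : (0:ℝ) ≤ -⟪u, L u⟫ - ⟪L u, u⟫ := by
    have h0 : ⟪u, L u⟫ ≤ (0:ℝ) := (real_inner_comm (L u) u) ▸ hL u
    have h0' : ⟪L u, u⟫ ≤ (0:ℝ) := hL u
    linarith
  have h2 : (0:ℝ) ≤ τ ^ (2 * k.val + 1) := le_of_lt (pow_pos hτ _)
  exact mul_nonneg (mul_nonneg (hd k) h2) h1
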